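/- For a > 0 and S > 0, the function r(S,a) = -a²(1 + 10e^{-aS} + e^{-2aS})/(3(1-e^{-aS})²) together with x(S,T,a) = -3a - 6a(e^{-aS} + e^{-aT} - 3e^{-a(S+T)} + e^{-2a(S+T)})/((1-e^{-aS})(1-e^{-aT})(1-e^{-a(S+T)})) satisfies the PDE 2·x(S,T,a)² + 6·(∂_S x(S,T,a) + ∂_T x(S,T,a)) + 27·(r(S,a) + r(T,a)) = 0 for all S, T > 0. -/

import Mathlib

open Real

private lemma auxD (a c S : ℝ)
    (hne : (1 - Real.exp (-a*S)) * (1-c) * (1 - Real.exp (-a*S)*c) ≠ 0) :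
    HasDerivAt (fun U : ℝ => -3*a - 6*a*(Real.exp (-a*U) + c - 3*(Real.exp (-a*U)*c)
        + (Real.exp (-a*U)*c)^2) /
      ((1 - Real.exp (-a*U))*(1-c)*(1 - Real.exp (-a*U)*c)))
      (-((6*a*((-a*Real.exp (-a*S)) - 3*((-a*Real.exp (-a*S))*c)
            + 2*(Real.exp (-a*S)*c)*((-a*Real.exp (-a*S))*c)) *
          ((1 - Real.exp (-a*S))*(1-c)*(1 - Real.exp (-a*S)*c)) -
        6*a*(Real.exp (-a*S) + c - 3*(Real.exp (-a*S)*c) + (Real.exp (-a*S)*c)^2) *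
          ((a*Real.exp (-a*S))*(1-c)*(1 - Real.exp (-a*S)*c)
            + (1 - Real.exp (-a*S))*(1-c)*(a*Real.exp (-a*S)*c))) /
        ((1 - Real.exp (-a*S))*(1-c)*(1 - Real.exp (-a*S)*c))^2)) S := by
  have he : HasDerivAt (fun U : ℝ => Real.exp (-a*U)) (-a * Real.exp (-a*S)) S := by
    simpa [mul_comm] using ((hasDerivAt_id S).const_mul (-a)).exp
  have hnum := ((he.add_const c).sub ((he.mul_const c).const_mul 3)).add
    ((he.mul_const c).pow 2)
  have hden := (((hasDerivAt_const S (1:ℝ)).sub he).mul_const (1-c)).mul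
    ((hasDerivAt_const S (1:ℝ)).sub (he.mul_const c))
  have h := (hasDerivAt_const S (-3*a)).sub ((hnum.const_mul (6*a)).div hden hne)
  refine h.congr_deriv ?_
  simp only [Pi.sub_apply, Pi.mul_apply, Pi.add_apply, Pi.pow_apply]
  ring

set_option maxHeartbeats 2000000 in
theorem stmt_5 (a : ℝ) (ha : 0 < a)
    (r : ℝ → ℝ)
    (hr : ∀ S : ℝ, r S = -a ^ 2 * (1 + 10 * Real.exp (-a * S) + Real.exp (-2 * a * S)) /
      (3 * (1 - Real.exp (-a * S)) ^ 2))
    (x : ℝ → ℝ → ℝ)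
    (hx : ∀ U T : ℝ, x U T = -3 * a -
      6 * a * (Real.exp (-a * U) + Real.exp (-a * T) - 3 * Real.exp (-a * (U + T))
        + Real.exp (-2 * a * (U + T))) /
      ((1 - Real.exp (-a * U)) * (1 - Real.exp (-a * T)) * (1 - Real.exp (-a * (U + T))))) :
    ∀ S T : ℝ, 0 < S → 0 < T →
      2 * (x S T) ^ 2 +
        6 * (deriv (fun U : ℝ => x U T) S + deriv (fun V : ℝ => x S V) T) +
        27 * (r S + r T) = 0 := by
  intro S T hS hT
  have hu0 : 0 < Real.exp (-a*S) := Real.exp_pos _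
  have hv0 : 0 < Real.exp (-a*T) := Real.exp_pos _
  have hu1 : Real.exp (-a*S) < 1 := Real.exp_lt_one_iff.mpr (by nlinarith)
  have hv1 : Real.exp (-a*T) < 1 := Real.exp_lt_one_iff.mpr (by nlinarith)
  have huv1 : Real.exp (-a*S) * Real.exp (-a*T) < 1 := by nlinarith
  have h1u : (1:ℝ) - Real.exp (-a*S) ≠ 0 := by nlinarith
  have h1v : (1:ℝ) - Real.exp (-a*T) ≠ 0 := by nlinarith
  have h1uv : (1:ℝ) - Real.exp (-a*S) * Real.exp (-a*T) ≠ 0 := by nlinarith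
  have h1vu : (1:ℝ) - Real.exp (-a*T) * Real.exp (-a*S) ≠ 0 := by nlinarith
  have hneS : (1 - Real.exp (-a*S)) * (1 - Real.exp (-a*T))
      * (1 - Real.exp (-a*S) * Real.exp (-a*T)) ≠ 0 := by
    exact mul_ne_zero (mul_ne_zero h1u h1v) h1uv
  have hneT : (1 - Real.exp (-a*T)) * (1 - Real.exp (-a*S))
      * (1 - Real.exp (-a*T) * Real.exp (-a*S)) ≠ 0 := by
    exact mul_ne_zero (mul_ne_zero h1v h1u) h1vu
  have hfun1 : (fun U : ℝ => x U T) = fun U : ℝ =>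
      -3*a - 6*a*(Real.exp (-a*U) + Real.exp (-a*T) - 3*(Real.exp (-a*U)*Real.exp (-a*T))
        + (Real.exp (-a*U)*Real.exp (-a*T))^2) /
      ((1 - Real.exp (-a*U))*(1 - Real.exp (-a*T))*(1 - Real.exp (-a*U)*Real.exp (-a*T))) := by
    funext U
    rw [hx, show (-a*(U+T)) = -a*U + -a*T by ring, Real.exp_add,
      show (-2*a*(U+T)) = (-a*U + -a*T) + (-a*U + -a*T) by ring, Real.exp_add, Real.exp_add]
    ring
  have hfun2 : (fun V : ℝ => x S V) = fun V : ℝ =>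
      -3*a - 6*a*(Real.exp (-a*V) + Real.exp (-a*S) - 3*(Real.exp (-a*V)*Real.exp (-a*S))
        + (Real.exp (-a*V)*Real.exp (-a*S))^2) /
      ((1 - Real.exp (-a*V))*(1 - Real.exp (-a*S))*(1 - Real.exp (-a*V)*Real.exp (-a*S))) := by
    funext V
    rw [hx, show (-a*(S+V)) = -a*V + -a*S by ring, Real.exp_add,
      show (-2*a*(S+V)) = (-a*V + -a*S) + (-a*V + -a*S) by ring, Real.exp_add, Real.exp_add]
    ring
  have hxval : x S T = -3*a -
      6*a*(Real.exp (-a*S) + Real.exp (-a*T) - 3*(Real.exp (-a*S)*Real.exp (-a*T))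
        + (Real.exp (-a*S)*Real.exp (-a*T))^2) /
      ((1 - Real.exp (-a*S))*(1 - Real.exp (-a*T))*(1 - Real.exp (-a*S)*Real.exp (-a*T))) := by
    rw [hx, show (-a*(S+T)) = -a*S + -a*T by ring, Real.exp_add,
      show (-2*a*(S+T)) = (-a*S + -a*T) + (-a*S + -a*T) by ring, Real.exp_add, Real.exp_add]
    ring
  have hrS : r S = -a^2 * (1 + 10*Real.exp (-a*S) + Real.exp (-a*S)^2) /
      (3 * (1 - Real.exp (-a*S))^2) := by
    rw [hr, show (-2*a*S) = -a*S + -a*S by ring, Real.exp_add, ← sq]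
  have hrT : r T = -a^2 * (1 + 10*Real.exp (-a*T) + Real.exp (-a*T)^2) /
      (3 * (1 - Real.exp (-a*T))^2) := by
    rw [hr, show (-2*a*T) = -a*T + -a*T by ring, Real.exp_add, ← sq]
  rw [hfun1, hfun2, (auxD a (Real.exp (-a*T)) S hneS).deriv,
    (auxD a (Real.exp (-a*S)) T hneT).deriv, hxval, hrS, hrT]
  set u := Real.exp (-a*S) with hu
  set v := Real.exp (-a*T) with hv
  field_simp
  ring
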